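/- Let U be a finite nonempty set, d a metric on U, and α > 0. The Exponential Mechanism satisfies α-condensed local differential privacy: for all v1, v2, y ∈ U, Pr[Φ_EM(v1) = y] ≤ exp(α·d(v1,v2)) · Pr[Φ_EM(v2) = y]. -/
import Mathlib

/-- The probability that the Exponential Mechanism with distance `d` and
privacy parameter `α` outputs `y` on input `v`. -/
noncomputable def EMprob {U : Type*} [Fintype U] (d : U → U → ℝ) (α : ℝ) (v y : U) : ℝ :=
  Real.exp (-α * d v y / 2) / ∑ z, Real.exp (-α * d v z / 2)

/-- The Exponential Mechanism satisfies α-CLDP. -/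
theorem em_satisfies_cldp {U : Type*} [Fintype U] [Nonempty U]
    (d : U → U → ℝ) (α : ℝ) (hα : 0 < α)
    (hd_nonneg : ∀ x y, 0 ≤ d x y)
    (hd_symm : ∀ x y, d x y = d y x)
    (hd_tri : ∀ x y z, d x z ≤ d x y + d y z)
    (hd_eq : ∀ x y, d x y = 0 ↔ x = y)
    (v1 v2 y : U) :
    EMprob d α v1 y ≤ Real.exp (α * d v1 v2) * EMprob d α v2 y := by
  unfold EMprob
  have hS1pos : 0 < ∑ z, Real.exp (-α * d v1 z / 2) :=
    Finset.sum_pos (fun z _ => Real.exp_pos _) Finset.univ_nonempty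
  have hS2pos : 0 < ∑ z, Real.exp (-α * d v2 z / 2) :=
    Finset.sum_pos (fun z _ => Real.exp_pos _) Finset.univ_nonempty
  have hN : Real.exp (-α * d v1 y / 2) ≤ Real.exp (α * d v1 v2 / 2) * Real.exp (-α * d v2 y / 2) := by
    rw [← Real.exp_add]
    apply Real.exp_le_exp.mpr
    have h1 : α * d v2 y ≤ α * (d v2 v1 + d v1 y) :=
      mul_le_mul_of_nonneg_left (hd_tri v2 v1 y) hα.le
    have h2 := hd_symm v1 v2
    rw [h2]; linarith
  have hS : (∑ z, Real.exp (-α * d v2 z / 2)) ≤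
      Real.exp (α * d v1 v2 / 2) * ∑ z, Real.exp (-α * d v1 z / 2) := by
    rw [Finset.mul_sum]
    apply Finset.sum_le_sum
    intro z _
    rw [← Real.exp_add]
    apply Real.exp_le_exp.mpr
    have h1 : α * d v1 z ≤ α * (d v1 v2 + d v2 z) :=
      mul_le_mul_of_nonneg_left (hd_tri v1 v2 z) hα.le
    linarith
  rw [mul_div_assoc', div_le_div_iff₀ hS1pos hS2pos]
  calc Real.exp (-α * d v1 y / 2) * ∑ z, Real.exp (-α * d v2 z / 2)
      ≤ (Real.exp (α * d v1 v2 / 2) * Real.exp (-α * d v2 y / 2)) *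
        (Real.exp (α * d v1 v2 / 2) * ∑ z, Real.exp (-α * d v1 z / 2)) :=
        mul_le_mul hN hS hS2pos.le (by positivity)
    _ = Real.exp (α * d v1 v2) * Real.exp (-α * d v2 y / 2) * ∑ z, Real.exp (-α * d v1 z / 2) := by
        rw [show Real.exp (α * d v1 v2) = Real.exp (α * d v1 v2 / 2) * Real.exp (α * d v1 v2 / 2) by
          rw [← Real.exp_add]; ring_nf]
        ring
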